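/- Sparse path-counting bound: let H = T + V with T = ∑_{j,k} τ_{j,k} A_j†A_k and V = ∑_{l,m} ν_{l,m} N_l N_m on n fermionic modes, where each row and column of τ and ν has at most d nonzero entries. Fix γ ∈ {0,1}^{p+1} and consider all fermionic paths P arising in the full expansion of the nested commutator [H_{γ_{p+1}}, …, [H_{γ₂}, H_{γ₁}]] (H₀ = V, H₁ = T) into signed products of elementary fermionic operators, summed over all index tuples with nonzero coefficients. Then for any η-electron configuration c, ∑_{index tuples} ∑_{paths P} ‖P |c⟩‖ = O(η d^{p+1}), where the implied constant depends only on p; in particular at most O(η d^{p+1}) paths act nonzero on |c⟩. -/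

import Mathlib

open Matrix
noncomputable section

/-- A fermionic occupation configuration on `n` modes. -/
abbrev Config (n : ℕ) := Fin n → Bool

/-- The fermionic Fock space on `n` modes. -/
abbrev Fock (n : ℕ) := EuclideanSpace ℂ (Config n)

/-- Hamming weight (number of occupied modes) of a configuration. -/
def wt {n : ℕ} (c : Config n) : ℕ := (Finset.univ.filter fun k => c k = true).card

/-- The Jordan–Wigner sign `(-1)^{∑_{k<j} c_k}`. -/
def signFactor {n : ℕ} (j : Fin n) (c : Config n) : ℂ :=
  (-1 : ℂ) ^ ((Finset.univ.filter fun k => k < j ∧ c k = true).card)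

/-- The fermionic creation operator `A_j†`, as a matrix in the occupation basis. -/
def createM {n : ℕ} (j : Fin n) : Matrix (Config n) (Config n) ℂ :=
  Matrix.of fun c' c =>
    if c j = false ∧ c' = Function.update c j true then signFactor j c else 0

/-- The fermionic annihilation operator `A_j`, the Hermitian adjoint of `A_j†`. -/
def annM {n : ℕ} (j : Fin n) : Matrix (Config n) (Config n) ℂ := (createM j)ᴴ

/-- The occupation-number operator `N_j = A_j† A_j`. -/
def numM {n : ℕ} (j : Fin n) : Matrix (Config n) (Config n) ℂ := createM j * annM j

/-- The particle-number operator `N = ∑_j N_j`. -/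
def totalNumM (n : ℕ) : Matrix (Config n) (Config n) ℂ := ∑ j, numM j

/-- Orthogonal projection `Π_η` onto the `η`-electron subspace. -/
def projM (n η : ℕ) : Matrix (Config n) (Config n) ℂ :=
  Matrix.of fun c' c => if c' = c ∧ wt c = η then 1 else 0

/-- An operator is number-preserving iff it commutes with every `Π_η`. -/
def NumberPreserving {n : ℕ} (X : Matrix (Config n) (Config n) ℂ) : Prop :=
  ∀ η : ℕ, projM n η * X = X * projM n η

/-- Apply a matrix to a Fock-space vector, as a continuous linear map. -/
def appM {n : ℕ} (A : Matrix (Config n) (Config n) ℂ) : Fock n →L[ℂ] Fock n :=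
  Matrix.toEuclideanCLM (𝕜 := ℂ) A

/-- Spectral norm of a matrix (operator norm on the Euclidean space). -/
def specNorm {m : Type*} [Fintype m] [DecidableEq m] (A : Matrix m m ℂ) : ℝ :=
  ‖Matrix.toEuclideanCLM (𝕜 := ℂ) A‖

/-- The fermionic `η`-seminorm `‖X‖_η = ‖X Π_η‖`. -/
def fsem {n : ℕ} (η : ℕ) (X : Matrix (Config n) (Config n) ℂ) : ℝ :=
  specNorm (X * projM n η)

/-- Max-norm: largest matrix entry in absolute value. -/
def maxNorm {m : Type*} [Fintype m] (A : Matrix m m ℂ) : ℝ := ⨆ i, ⨆ j, ‖A i j‖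

open scoped Classical

/-- Elementary fermionic operators: creation, annihilation, occupation number. -/
inductive FOp (n : ℕ) : Type
  | create (j : Fin n)
  | ann (j : Fin n)
  | num (j : Fin n)

/-- Interpret an elementary fermionic operator as a matrix. -/
def FOp.toM {n : ℕ} : FOp n → Matrix (Config n) (Config n) ℂ
  | .create j => createM j
  | .ann j => annM j
  | .num j => numM j

/-- A fermionic path: a sign (`true` = `-1`) together with a product of
elementary fermionic operators (leftmost first). -/
abbrev FPath (n : ℕ) := Bool × List (FOp n)

/-- Interpret a fermionic path as a matrix. -/
def FPath.toM {n : ℕ} (P : FPath n) : Matrix (Config n) (Config n) ℂ :=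
  (if P.1 then (-1 : ℂ) else 1) • (P.2.map FOp.toM).prod

/-- The commutator of `H^γ_{jk}` (`γ = true`: `A_j†A_k`; `γ = false`: `N_jN_k`)
with a single elementary fermionic operator, expanded as a list of signed
products via the standard commutation relations. -/
def commOp {n : ℕ} (γ : Bool) (j k : Fin n) : FOp n → List (Bool × List (FOp n))
  | .create j' =>
      if γ then (if k = j' then [(false, [FOp.create j])] else [])
      else (if k = j' then [(false, [FOp.num j, FOp.create j'])] else []) ++
           (if j = j' then [(false, [FOp.create j', FOp.num k])] else [])
  | .ann k' =>
      if γ then (if k' = j then [(true, [FOp.ann k])] else [])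
      else (if k = k' then [(true, [FOp.num j, FOp.ann k'])] else []) ++
           (if j = k' then [(true, [FOp.ann k', FOp.num k])] else [])
  | .num l =>
      if γ then (if k = l then [(false, [FOp.create j, FOp.ann k])] else []) ++
                (if j = l then [(true, [FOp.create j, FOp.ann k])] else [])
      else []

/-- The commutator of `H^γ_{jk}` with a product of elementary operators,
obtained via the Leibniz rule `[X, Y₁⋯Y_r] = ∑ Y₁⋯[X,Y_i]⋯Y_r`. -/
def commList {n : ℕ} (γ : Bool) (j k : Fin n) :
    List (FOp n) → List (Bool × List (FOp n))
  | [] => []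
  | X :: rest =>
      ((commOp γ j k X).map fun p => (p.1, p.2 ++ rest)) ++
      ((commList γ j k rest).map fun p => (p.1, X :: p.2))

/-- The commutator of `H^γ_{jk}` with a fermionic path. -/
def commPath {n : ℕ} (γ : Bool) (j k : Fin n) (P : FPath n) : List (FPath n) :=
  (commList γ j k P.2).map fun p => (xor P.1 p.1, p.2)

/-- The innermost term `H^γ_{jk}` as a fermionic path. -/
def basePath {n : ℕ} (γ : Bool) (j k : Fin n) : FPath n :=
  (false, if γ then [FOp.create j, FOp.ann k] else [FOp.num j, FOp.num k])

/-- Expansion of the nested commutator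
`[H^{γ_{p+1}}_{j_{p+1}k_{p+1}}, …, [H^{γ₂}_{j₂k₂}, H^{γ₁}_{j₁k₁}]]` into
fermionic paths, the list of `(γ_q, (j_q, k_q))` being given outermost first. -/
def expandNested {n : ℕ} : List (Bool × Fin n × Fin n) → List (FPath n)
  | [] => []
  | [(γ, j, k)] => [basePath γ j k]
  | (γ, j, k) :: rest => (expandNested rest).flatMap (commPath γ j k)

variable {n : ℕ}

lemma appM_apply (A : Matrix (Config n) (Config n) ℂ) (x : Fock n) (c : Config n) :
    appM A x c = ∑ c', A c c' * x c' := by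
  have := Matrix.ofLp_toEuclideanCLM (A := A) (x := x)
  have h2 := congrFun this c
  exact h2

/-- basis vector -/
def eV (c : Config n) : Fock n := EuclideanSpace.single c 1

lemma appM_single_apply (A : Matrix (Config n) (Config n) ℂ) (c c'' : Config n) :
    appM A (eV c) c'' = A c'' c := by
  rw [eV, appM_apply]
  simp [EuclideanSpace.single_apply]

lemma appM_mul (A B : Matrix (Config n) (Config n) ℂ) (x : Fock n) :
    appM (A * B) x = appM A (appM B x) := by
  simp [appM, _root_.map_mul]

lemma appM_smulM (s : ℂ) (A : Matrix (Config n) (Config n) ℂ) :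
    appM (s • A) = s • appM A := by
  simp [appM, _root_.map_smul]

lemma appM_one : appM (1 : Matrix (Config n) (Config n) ℂ) = ContinuousLinearMap.id ℂ (Fock n) := by
  simp [appM, _root_.map_one]; rfl

lemma norm_eV (c : Config n) : ‖eV c‖ = 1 := by
  simp [eV, EuclideanSpace.norm_single]

lemma norm_signFactor (j : Fin n) (c : Config n) : ‖signFactor j c‖ = 1 := by
  simp [signFactor]

lemma create_apply (j : Fin n) (c : Config n) :
    appM (createM j) (eV c) =
      if c j = false then signFactor j c • eV (Function.update c j true) else 0 := by
  ext c''
  rw [appM_single_apply]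
  by_cases h : c j = false
  · simp only [if_pos h, createM, Matrix.of_apply]
    by_cases h2 : c'' = Function.update c j true
    · simp [h, h2, eV, EuclideanSpace.single_apply]
    · simp [h, h2, eV, EuclideanSpace.single_apply]
  · simp [createM, h]

lemma update_true_eq (j : Fin n) (c : Config n) (h : c j = true) :
    Function.update c j true = c := by
  conv_rhs => rw [← Function.update_eq_self j c]
  rw [h]

lemma ann_apply (j : Fin n) (c : Config n) :
    appM (annM j) (eV c) =
      if c j = true then
        (starRingEnd ℂ) (signFactor j (Function.update c j false)) • eV (Function.update c j false)
      else 0 := by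
  ext c''
  rw [appM_single_apply]
  have hentry : annM j c'' c =
      if c'' j = false ∧ c = Function.update c'' j true then
        (starRingEnd ℂ) (signFactor j c'') else 0 := by
    simp only [annM, Matrix.conjTranspose_apply, createM, Matrix.of_apply]
    split_ifs <;> simp
  rw [hentry]
  by_cases h : c j = true
  · have hc0 : Function.update c j false j = false := by simp
    by_cases h2 : c'' = Function.update c j false
    · subst h2
      have hcond : Function.update c j false j = false ∧
          c = Function.update (Function.update c j false) j true :=
        ⟨hc0, by rw [Function.update_idem, update_true_eq j c h]⟩
      rw [if_pos h, if_pos hcond]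
      simp [eV, EuclideanSpace.single_apply]
    · have hnot : ¬ (c'' j = false ∧ c = Function.update c'' j true) := by
        rintro ⟨hf, hu⟩
        apply h2
        rw [hu, Function.update_idem]
        funext i
        by_cases hi : i = j
        · subst hi; simp [hf]
        · simp [Function.update_of_ne hi]
      rw [if_neg hnot, if_pos h]
      simp [eV, EuclideanSpace.single_apply, h2]
  · have : ¬ (c'' j = false ∧ c = Function.update c'' j true) := by
      rintro ⟨hf, hu⟩
      apply h
      rw [hu]
      simp
    simp [h, this]

lemma num_apply_zero (j : Fin n) (c : Config n) (h : c j = false) :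
    appM (numM j) (eV c) = 0 := by
  rw [numM, appM_mul, ann_apply]
  simp [h]

lemma ann_apply_zero (j : Fin n) (c : Config n) (h : c j = false) :
    appM (annM j) (eV c) = 0 := by
  rw [ann_apply]; simp [h]

lemma op_apply (X : FOp n) (c : Config n) :
    ∃ (s : ℂ) (c' : Config n), ‖s‖ ≤ 1 ∧ appM X.toM (eV c) = s • eV c' := by
  cases X with
  | create j =>
    by_cases h : c j = false
    · exact ⟨signFactor j c, Function.update c j true, le_of_eq (norm_signFactor j c),
        by rw [FOp.toM, create_apply, if_pos h]⟩
    · exact ⟨0, c, by simp, by rw [FOp.toM, create_apply, if_neg h]; simp⟩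
  | ann j =>
    by_cases h : c j = true
    · refine ⟨(starRingEnd ℂ) (signFactor j (Function.update c j false)),
        Function.update c j false, ?_, by rw [FOp.toM, ann_apply, if_pos h]⟩
      rw [RCLike.norm_conj, norm_signFactor]
    · exact ⟨0, c, by simp, by rw [FOp.toM, ann_apply, if_neg h]; simp⟩
  | num j =>
    by_cases h : c j = true
    · have hc0 : Function.update c j false j = false := by simp
      refine ⟨(starRingEnd ℂ) (signFactor j (Function.update c j false)) *
        signFactor j (Function.update c j false), c, ?_, ?_⟩
      · rw [norm_mul, RCLike.norm_conj, norm_signFactor]; norm_num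
      · rw [FOp.toM, numM, appM_mul, ann_apply, if_pos h, ContinuousLinearMap.map_smul,
          create_apply, if_pos hc0, Function.update_idem, update_true_eq j c h, smul_smul]
    · exact ⟨0, c, by simp, by
        rw [FOp.toM, num_apply_zero j c (by simpa using h)]; simp⟩

lemma prod_apply' (L : List (FOp n)) (c : Config n) :
    ∃ (s : ℂ) (c' : Config n), ‖s‖ ≤ 1 ∧ appM ((L.map FOp.toM).prod) (eV c) = s • eV c' := by
  induction L generalizing c with
  | nil => exact ⟨1, c, by simp, by rw [List.map_nil, List.prod_nil, appM_one]; simp⟩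
  | cons X L ih =>
    obtain ⟨s, c', hs, hL⟩ := ih c
    obtain ⟨s2, c'', hs2, hX⟩ := op_apply X c'
    refine ⟨s * s2, c'', ?_, ?_⟩
    · rw [norm_mul]
      nlinarith [norm_nonneg s, norm_nonneg s2]
    · rw [List.map_cons, List.prod_cons, appM_mul, hL, ContinuousLinearMap.map_smul, hX,
        smul_smul]

/-- The index of the rightmost operator, provided it is `ann` or `num`. -/
def lastIdx {n : ℕ} : List (FOp n) → Option (Fin n) := fun L =>
  match L.getLast? with
  | some (.ann r) => some r
  | some (.num r) => some r
  | _ => none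

lemma op_apply_last_zero {n : ℕ} (r : Fin n) (c : Config n) (h : c r = false) (X : FOp n)
    (hX : X = FOp.ann r ∨ X = FOp.num r) : appM X.toM (eV c) = 0 := by
  rcases hX with h1 | h1 <;> subst h1
  · exact ann_apply_zero r c h
  · exact num_apply_zero r c h

lemma prod_last_zero {n : ℕ} (L : List (FOp n)) (X : FOp n) (c : Config n)
    (h : appM X.toM (eV c) = 0) :
    appM (((L ++ [X]).map FOp.toM).prod) (eV c) = 0 := by
  rw [List.map_append, List.prod_append, List.map_cons, List.map_nil, List.prod_cons,
    List.prod_nil, mul_one, appM_mul, h]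
  simp

lemma path_norm_le {n : ℕ} (P : FPath n) (c : Config n) :
    ‖appM P.toM (eV c)‖ ≤ 1 := by
  obtain ⟨s, c', hs, hL⟩ := prod_apply' P.2 c
  rw [FPath.toM, appM_smulM]
  have : ‖(if P.1 then (-1 : ℂ) else 1)‖ = 1 := by
    split_ifs <;> simp
  rw [ContinuousLinearMap.smul_apply, norm_smul, this, one_mul, hL, norm_smul, norm_eV, mul_one]
  exact hs

lemma path_norm_zero {n : ℕ} (P : FPath n) (c : Config n) (r : Fin n)
    (hr : lastIdx P.2 = some r) (hc : c r = false) :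
    appM P.toM (eV c) = 0 := by
  have hzero : appM ((P.2.map FOp.toM).prod) (eV c) = 0 := by
    cases e : P.2.getLast? with
    | none => rw [lastIdx, e] at hr; simp at hr
    | some X =>
      have hdec : P.2.dropLast ++ [X] = P.2 := List.dropLast_append_getLast? X e
      cases X with
      | create j => rw [lastIdx, e] at hr; simp at hr
      | ann j =>
        rw [lastIdx, e] at hr
        simp only [Option.some.injEq] at hr
        subst hr
        rw [← hdec]
        exact prod_last_zero _ _ _ (op_apply_last_zero j c hc _ (Or.inl rfl))
      | num j =>
        rw [lastIdx, e] at hr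
        simp only [Option.some.injEq] at hr
        subst hr
        rw [← hdec]
        exact prod_last_zero _ _ _ (op_apply_last_zero j c hc _ (Or.inr rfl))
  rw [FPath.toM, appM_smulM, ContinuousLinearMap.smul_apply, hzero, smul_zero]

lemma lastIdx_ne_nil {n : ℕ} {L : List (FOp n)} {r : Fin n} (h : lastIdx L = some r) :
    L ≠ [] := by
  rintro rfl
  rw [lastIdx] at h
  simp at h

lemma lastIdx_cons {n : ℕ} (X : FOp n) {L : List (FOp n)} (h : L ≠ []) :
    lastIdx (X :: L) = lastIdx L := by
  cases L with
  | nil => exact absurd rfl h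
  | cons Y L' => rw [lastIdx, lastIdx, List.getLast?_cons_cons]

lemma lastIdx_append {n : ℕ} (L₁ : List (FOp n)) {L₂ : List (FOp n)} (h : L₂ ≠ []) :
    lastIdx (L₁ ++ L₂) = lastIdx L₂ := by
  induction L₁ with
  | nil => rw [List.nil_append]
  | cons X L ih =>
    rw [List.cons_append, lastIdx_cons X (by simp [h]), ih]

lemma mem_commOp_shape {n : ℕ} {γ : Bool} {j k : Fin n} {X : FOp n}
    {q : Bool × List (FOp n)} (hq : q ∈ commOp γ j k X) :
    q.2.length ≤ 2 ∧ q.2 ≠ [] := by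
  cases X <;> cases γ <;> simp only [commOp, Bool.false_eq_true, if_true, if_false,
    List.mem_append] at hq <;>
    first
    | (rcases hq with hq | hq <;> split_ifs at hq <;> simp_all)
    | (split_ifs at hq <;> simp_all)

lemma mem_commOp_last {n : ℕ} {γ : Bool} {j k r' : Fin n} {X : FOp n}
    (hX : X = FOp.ann r' ∨ X = FOp.num r') {q : Bool × List (FOp n)}
    (hq : q ∈ commOp γ j k X) : ∃ r, lastIdx q.2 = some r := by
  rcases hX with rfl | rfl <;> cases γ <;>
    simp only [commOp, Bool.false_eq_true, if_true, if_false, List.mem_append] at hq <;>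
    (try split_ifs at hq) <;>
    simp only [List.mem_singleton, List.not_mem_nil, or_false, false_or] at hq <;>
    first
      | exact absurd hq (List.not_mem_nil q)
      | (rcases hq with rfl | rfl <;> exact ⟨_, rfl⟩)
      | (subst hq; exact ⟨_, rfl⟩)

lemma mem_commList_shape {n : ℕ} {γ : Bool} {j k : Fin n} :
    ∀ {M : List (FOp n)} {q : Bool × List (FOp n)}, q ∈ commList γ j k M →
      (∃ r, lastIdx M = some r) →
      q.2.length ≤ M.length + 1 ∧ (∃ r, lastIdx q.2 = some r) := by
  intro M
  induction M with
  | nil => intro q hq _; simp [commList] at hq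
  | cons X rest ih =>
    intro q hq hlast
    rw [commList, List.mem_append] at hq
    rcases hq with hq | hq
    · obtain ⟨p, hp, rfl⟩ := List.mem_map.mp hq
      obtain ⟨hlen, hne⟩ := mem_commOp_shape hp
      constructor
      · simp only [List.length_append, List.length_cons]
        omega
      · rcases List.eq_nil_or_concat rest with hrest | _
        · subst hrest
          obtain ⟨r0, hr0⟩ := hlast
          have hX : X = FOp.ann r0 ∨ X = FOp.num r0 := by
            cases X <;> rw [lastIdx] at hr0 <;> simp_all [List.getLast?]
          obtain ⟨r1, hr1⟩ := mem_commOp_last hX hp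
          exact ⟨r1, by rw [List.append_nil]; exact hr1⟩
        · have hrest : rest ≠ [] := by rintro rfl; simp_all
          obtain ⟨r0, hr0⟩ := hlast
          rw [lastIdx_cons X hrest] at hr0
          exact ⟨r0, by rw [lastIdx_append _ hrest]; exact hr0⟩
    · obtain ⟨p, hp, rfl⟩ := List.mem_map.mp hq
      have hrest : rest ≠ [] := by rintro rfl; simp [commList] at hp
      obtain ⟨r0, hr0⟩ := hlast
      rw [lastIdx_cons X hrest] at hr0
      obtain ⟨hlen, r1, hr1⟩ := ih hp ⟨r0, hr0⟩
      refine ⟨by simpa using Nat.succ_le_succ hlen, r1, ?_⟩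
      rw [lastIdx_cons X (lastIdx_ne_nil hr1)]
      exact hr1

/-- Invariant for paths at depth `m`. -/
def GoodP {n : ℕ} (m : ℕ) (P : FPath n) : Prop :=
  P.2.length ≤ m + 1 ∧ ∃ r, lastIdx P.2 = some r

lemma basePath_lastIdx {n : ℕ} (γ : Bool) (j k : Fin n) :
    lastIdx (basePath γ j k).2 = some k := by
  cases γ <;> simp [basePath, lastIdx, List.getLast?]

lemma goodP_basePath {n : ℕ} (γ : Bool) (j k : Fin n) : GoodP 1 (basePath γ j k) :=
  ⟨by cases γ <;> simp [basePath], k, basePath_lastIdx γ j k⟩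

lemma goodP_commPath {n : ℕ} {γ : Bool} {j k : Fin n} {m : ℕ} {P P' : FPath n}
    (hP : GoodP m P) (h' : P' ∈ commPath γ j k P) : GoodP (m + 1) P' := by
  obtain ⟨q, hq, rfl⟩ := List.mem_map.mp h'
  obtain ⟨hlen, hlast⟩ := mem_commList_shape hq hP.2
  exact ⟨le_trans hlen (Nat.succ_le_succ hP.1), hlast⟩

section TDef

variable {n : ℕ} (τ ν : Matrix (Fin n) (Fin n) ℂ)

def coeffM (γ : Bool) : Matrix (Fin n) (Fin n) ℂ := if γ then τ else ν

def pairsSum (γ : Bool) (g : Fin n × Fin n → ℝ) : ℝ :=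
  ∑ jk : Fin n × Fin n, if coeffM τ ν γ jk.1 jk.2 ≠ 0 then g jk else 0

def T : List Bool → (FPath n → ℝ) → ℝ
  | [], _ => 0
  | [γ], φ => pairsSum τ ν γ fun jk => φ (basePath γ jk.1 jk.2)
  | γ :: γ' :: l, φ => pairsSum τ ν γ fun jk =>
      T (γ' :: l) fun P => ((commPath γ jk.1 jk.2 P).map φ).sum

lemma T_cons (γ : Bool) {l : List Bool} (hl : l ≠ []) (φ : FPath n → ℝ) :
    T τ ν (γ :: l) φ =
      pairsSum τ ν γ fun jk =>
        T τ ν l fun P => ((commPath γ jk.1 jk.2 P).map φ).sum := by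
  cases l with
  | nil => exact absurd rfl hl
  | cons a l => rfl

lemma pairsSum_congr {γ : Bool} {g h : Fin n × Fin n → ℝ}
    (hgh : ∀ jk, coeffM τ ν γ jk.1 jk.2 ≠ 0 → g jk = h jk) :
    pairsSum τ ν γ g = pairsSum τ ν γ h := by
  unfold pairsSum
  refine Finset.sum_congr rfl fun jk _ => ?_
  by_cases hc : coeffM τ ν γ jk.1 jk.2 ≠ 0
  · rw [if_pos hc, if_pos hc, hgh jk hc]
  · rw [if_neg hc, if_neg hc]

lemma pairsSum_mono {γ : Bool} {g h : Fin n × Fin n → ℝ}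
    (hgh : ∀ jk, coeffM τ ν γ jk.1 jk.2 ≠ 0 → g jk ≤ h jk) :
    pairsSum τ ν γ g ≤ pairsSum τ ν γ h := by
  unfold pairsSum
  refine Finset.sum_le_sum fun jk _ => ?_
  by_cases hc : coeffM τ ν γ jk.1 jk.2 ≠ 0
  · rw [if_pos hc, if_pos hc]; exact hgh jk hc
  · rw [if_neg hc, if_neg hc]

lemma pairsSum_add (γ : Bool) (g h : Fin n × Fin n → ℝ) :
    pairsSum τ ν γ (fun jk => g jk + h jk) = pairsSum τ ν γ g + pairsSum τ ν γ h := by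
  unfold pairsSum
  rw [← Finset.sum_add_distrib]
  refine Finset.sum_congr rfl fun jk _ => ?_
  split_ifs <;> simp

lemma pairsSum_smul (γ : Bool) (a : ℝ) (g : Fin n × Fin n → ℝ) :
    pairsSum τ ν γ (fun jk => a * g jk) = a * pairsSum τ ν γ g := by
  unfold pairsSum
  rw [Finset.mul_sum]
  refine Finset.sum_congr rfl fun jk _ => ?_
  split_ifs <;> simp

lemma T_congr : ∀ (l : List Bool) (φ ψ : FPath n → ℝ), (∀ P, φ P = ψ P) →
    T τ ν l φ = T τ ν l ψ := by
  intro l φ ψ h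
  have : φ = ψ := funext h
  rw [this]

lemma T_zero : ∀ (l : List Bool), T τ ν l (fun _ => (0 : ℝ)) = 0 := by
  intro l
  induction l with
  | nil => rfl
  | cons γ l ih =>
    cases l with
    | nil =>
      rw [T]
      unfold pairsSum
      simp
    | cons a l' =>
      rw [T_cons τ ν γ (by simp)]
      have h1 : (fun jk : Fin n × Fin n =>
          T τ ν (a :: l') fun P => ((commPath γ jk.1 jk.2 P).map fun _ => (0:ℝ)).sum) =
          fun _ => (0:ℝ) := by
        funext jk
        rw [T_congr τ ν (a :: l') _ (fun _ => (0:ℝ)) (fun P => by simp), ih]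
      rw [h1]
      unfold pairsSum
      simp

lemma T_add : ∀ (l : List Bool) (φ ψ : FPath n → ℝ),
    T τ ν l (fun P => φ P + ψ P) = T τ ν l φ + T τ ν l ψ := by
  intro l
  induction l with
  | nil => intro φ ψ; simp [T]
  | cons γ l ih =>
    intro φ ψ
    cases l with
    | nil =>
      rw [T, T, T, ← pairsSum_add]
    | cons a l' =>
      rw [T_cons τ ν γ (by simp), T_cons τ ν γ (by simp), T_cons τ ν γ (by simp),
        ← pairsSum_add]
      refine pairsSum_congr τ ν fun jk _ => ?_
      rw [← ih]
      refine T_congr τ ν _ _ _ fun P => ?_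
      induction commPath γ jk.1 jk.2 P with
      | nil => simp
      | cons q Q ihq => simp_all; ring

lemma T_smul : ∀ (l : List Bool) (a : ℝ) (φ : FPath n → ℝ),
    T τ ν l (fun P => a * φ P) = a * T τ ν l φ := by
  intro l
  induction l with
  | nil => intro a φ; simp [T]
  | cons γ l ih =>
    intro a φ
    cases l with
    | nil =>
      rw [T, T, ← pairsSum_smul]
    | cons a' l' =>
      rw [T_cons τ ν γ (by simp), T_cons τ ν γ (by simp), ← pairsSum_smul]
      refine pairsSum_congr τ ν fun jk _ => ?_
      rw [← ih]
      refine T_congr τ ν _ _ _ fun P => ?_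
      induction commPath γ jk.1 jk.2 P with
      | nil => simp
      | cons q Q ihq => simp_all; ring

lemma T_finsetSum {α : Type*} (l : List Bool) (s : Finset α) (g : α → FPath n → ℝ) :
    T τ ν l (fun P => ∑ x ∈ s, g x P) = ∑ x ∈ s, T τ ν l (g x) := by
  classical
  induction s using Finset.induction_on with
  | empty => simpa using T_zero τ ν l
  | insert a s hx ih =>
    rw [Finset.sum_insert hx,
      T_congr τ ν l _ (fun P => g a P + ∑ x ∈ s, g x P)
        (fun P => Finset.sum_insert hx),
      T_add, ih]

lemma T_mono : ∀ (l : List Bool), l ≠ [] → ∀ (φ ψ : FPath n → ℝ),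
    (∀ P, GoodP l.length P → φ P ≤ ψ P) → T τ ν l φ ≤ T τ ν l ψ := by
  intro l
  induction l with
  | nil => intro h; exact absurd rfl h
  | cons γ l ih =>
    intro _ φ ψ h
    cases l with
    | nil =>
      rw [T, T]
      exact pairsSum_mono τ ν fun jk _ => h _ (goodP_basePath γ jk.1 jk.2)
    | cons a l' =>
      rw [T_cons τ ν γ (by simp), T_cons τ ν γ (by simp)]
      refine pairsSum_mono τ ν fun jk _ => ?_
      refine ih (by simp) _ _ fun P hP => ?_
      refine List.sum_le_sum fun P' hP' => ?_
      have : GoodP ((a :: l').length + 1) P' := goodP_commPath hP (by simpa using hP')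
      exact h P' (by simpa using this)

end TDef

section Count

variable {n : ℕ} (τ ν : Matrix (Fin n) (Fin n) ℂ) (d : ℕ)

/-- indicator of the rightmost index of a signed word -/
def indB {n : ℕ} (r : Fin n) (q : Bool × List (FOp n)) : ℝ :=
  if lastIdx q.2 = some r then 1 else 0

lemma li_ann (k : Fin n) : lastIdx [FOp.ann k] = some k := rfl
lemma li_ann2 (X : FOp n) (k : Fin n) : lastIdx [X, FOp.ann k] = some k := rfl
lemma li_num2 (X : FOp n) (k : Fin n) : lastIdx [X, FOp.num k] = some k := rfl
lemma li_create2 (X : FOp n) (k : Fin n) : lastIdx [X, FOp.create k] = none := rfl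
lemma li_create (k : Fin n) : lastIdx [FOp.create k] = none := rfl

lemma sum_ind_col (M : Matrix (Fin n) (Fin n) ℂ)
    (hc : ∀ k, ((Finset.univ.filter fun j => M j k ≠ 0).card ≤ d)) (a : Fin n) :
    ∑ jk : Fin n × Fin n, (if M jk.1 jk.2 ≠ 0 then (if jk.2 = a then (1:ℝ) else 0) else 0)
      ≤ d := by
  rw [Fintype.sum_prod_type]
  have h1 : ∀ j, (∑ k, if M j k ≠ 0 then (if k = a then (1:ℝ) else 0) else 0)
      = if M j a ≠ 0 then 1 else 0 := by
    intro j
    have h2 : ∀ k, (if M j k ≠ 0 then (if k = a then (1:ℝ) else 0) else 0)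
        = if k = a then (if M j a ≠ 0 then 1 else 0) else 0 := by
      intro k
      by_cases hk : k = a
      · subst hk; split_ifs <;> rfl
      · simp [hk]
    rw [Finset.sum_congr rfl fun k _ => h2 k, Finset.sum_ite_eq' Finset.univ a]
    simp
  rw [Finset.sum_congr rfl fun j _ => h1 j, Finset.sum_boole]
  exact_mod_cast hc a

lemma sum_ind_row (M : Matrix (Fin n) (Fin n) ℂ)
    (hr : ∀ j, ((Finset.univ.filter fun k => M j k ≠ 0).card ≤ d)) (a : Fin n) :
    ∑ jk : Fin n × Fin n, (if M jk.1 jk.2 ≠ 0 then (if jk.1 = a then (1:ℝ) else 0) else 0)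
      ≤ d := by
  rw [Fintype.sum_prod_type]
  have h1 : ∀ j, (∑ k, if M j k ≠ 0 then (if j = a then (1:ℝ) else 0) else 0)
      = if j = a then ∑ k, (if M a k ≠ 0 then (1:ℝ) else 0) else 0 := by
    intro j
    by_cases hj : j = a
    · subst hj
      simp only [if_pos rfl]
      refine Finset.sum_congr rfl fun k _ => ?_
      split_ifs <;> rfl
    · simp [hj]
  rw [Finset.sum_congr rfl fun j _ => h1 j, Finset.sum_ite_eq' Finset.univ a]
  simp only [Finset.mem_univ, if_pos]
  rw [Finset.sum_boole]
  exact_mod_cast hr a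

lemma sum_ind_both (M : Matrix (Fin n) (Fin n) ℂ) (a b : Fin n) :
    ∑ jk : Fin n × Fin n,
      (if M jk.1 jk.2 ≠ 0 then
        (if jk.1 = a then (1:ℝ) else 0) * (if jk.2 = b then 1 else 0) else 0)
      = if M a b ≠ 0 then 1 else 0 := by
  rw [Fintype.sum_eq_single ((a, b) : Fin n × Fin n)]
  · simp
  · intro jk hjk
    have : ¬(jk.1 = a ∧ jk.2 = b) := by
      intro ⟨h1, h2⟩
      exact hjk (Prod.ext h1 h2)
    rcases not_and_or.mp this with h | h <;> split_ifs <;> simp_all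

lemma sum_ind_both' (M : Matrix (Fin n) (Fin n) ℂ) (a b : Fin n) :
    ∑ jk : Fin n × Fin n,
      (if M jk.1 jk.2 ≠ 0 then
        (if a = jk.1 then (1:ℝ) else 0) * (if jk.2 = b then 1 else 0) else 0)
      = if M a b ≠ 0 then 1 else 0 := by
  rw [Fintype.sum_eq_single ((a, b) : Fin n × Fin n)]
  · simp
  · intro jk hjk
    have : ¬(a = jk.1 ∧ jk.2 = b) := by
      intro ⟨h1, h2⟩
      exact hjk (Prod.ext h1.symm h2)
    rcases not_and_or.mp this with h | h <;> split_ifs <;> simp_all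

/-- index of an elementary operator -/
def opIdx {n : ℕ} : FOp n → Fin n
  | .create j => j
  | .ann j => j
  | .num j => j

lemma commOp_length_le (γ : Bool) (j k : Fin n) (X : FOp n) :
    ((commOp γ j k X).length : ℝ) ≤
      (if j = opIdx X then 1 else 0) + (if k = opIdx X then 1 else 0) := by
  cases X <;> cases γ <;>
    simp only [commOp, opIdx, Bool.false_eq_true, if_true, if_false, List.length_append] <;>
    split_ifs <;> simp_all <;> norm_num <;> positivity

lemma coeff_row (γ : Bool)
    (hτr : ∀ j, ((Finset.univ.filter fun k => τ j k ≠ 0).card ≤ d))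
    (hνr : ∀ j, ((Finset.univ.filter fun k => ν j k ≠ 0).card ≤ d)) :
    ∀ j, ((Finset.univ.filter fun k => coeffM τ ν γ j k ≠ 0).card ≤ d) := by
  cases γ <;> simp only [coeffM, Bool.false_eq_true, if_true, if_false] <;> assumption

lemma coeff_col (γ : Bool)
    (hτc : ∀ k, ((Finset.univ.filter fun j => τ j k ≠ 0).card ≤ d))
    (hνc : ∀ k, ((Finset.univ.filter fun j => ν j k ≠ 0).card ≤ d)) :
    ∀ k, ((Finset.univ.filter fun j => coeffM τ ν γ j k ≠ 0).card ≤ d) := by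
  cases γ <;> simp only [coeffM, Bool.false_eq_true, if_true, if_false] <;> assumption

end Count

section Count2

variable {n : ℕ} (τ ν : Matrix (Fin n) (Fin n) ℂ) (d : ℕ)

lemma commOp_len_sum (γ : Bool) (X : FOp n)
    (hτr : ∀ j, ((Finset.univ.filter fun k => τ j k ≠ 0).card ≤ d))
    (hτc : ∀ k, ((Finset.univ.filter fun j => τ j k ≠ 0).card ≤ d))
    (hνr : ∀ j, ((Finset.univ.filter fun k => ν j k ≠ 0).card ≤ d))
    (hνc : ∀ k, ((Finset.univ.filter fun j => ν j k ≠ 0).card ≤ d)) :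
    ∑ jk : Fin n × Fin n,
      (if coeffM τ ν γ jk.1 jk.2 ≠ 0 then ((commOp γ jk.1 jk.2 X).length : ℝ) else 0)
      ≤ 2 * d := by
  have hle : ∀ jk : Fin n × Fin n,
      (if coeffM τ ν γ jk.1 jk.2 ≠ 0 then ((commOp γ jk.1 jk.2 X).length : ℝ) else 0) ≤
      (if coeffM τ ν γ jk.1 jk.2 ≠ 0 then (if jk.1 = opIdx X then (1:ℝ) else 0) else 0) +
      (if coeffM τ ν γ jk.1 jk.2 ≠ 0 then (if jk.2 = opIdx X then (1:ℝ) else 0) else 0) := by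
    intro jk
    by_cases hc : coeffM τ ν γ jk.1 jk.2 ≠ 0
    · simp only [if_pos hc]
      exact commOp_length_le γ jk.1 jk.2 X
    · simp [hc]
  calc ∑ jk : Fin n × Fin n,
      (if coeffM τ ν γ jk.1 jk.2 ≠ 0 then ((commOp γ jk.1 jk.2 X).length : ℝ) else 0)
      ≤ ∑ jk : Fin n × Fin n,
        ((if coeffM τ ν γ jk.1 jk.2 ≠ 0 then (if jk.1 = opIdx X then (1:ℝ) else 0) else 0) +
         (if coeffM τ ν γ jk.1 jk.2 ≠ 0 then (if jk.2 = opIdx X then (1:ℝ) else 0) else 0)) :=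
      Finset.sum_le_sum fun jk _ => hle jk
    _ = (∑ jk : Fin n × Fin n,
          (if coeffM τ ν γ jk.1 jk.2 ≠ 0 then (if jk.1 = opIdx X then (1:ℝ) else 0) else 0)) +
        (∑ jk : Fin n × Fin n,
          (if coeffM τ ν γ jk.1 jk.2 ≠ 0 then (if jk.2 = opIdx X then (1:ℝ) else 0) else 0)) :=
      Finset.sum_add_distrib
    _ ≤ (d : ℝ) + (d : ℝ) :=
      add_le_add (sum_ind_row d _ (coeff_row τ ν d γ hτr hνr) _)
        (sum_ind_col d _ (coeff_col τ ν d γ hτc hνc) _)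
    _ = 2 * d := by ring

lemma commOp_final_sum (γ : Bool) (r r' : Fin n) (X : FOp n)
    (hX : X = FOp.ann r' ∨ X = FOp.num r')
    (hτc : ∀ k, ((Finset.univ.filter fun j => τ j k ≠ 0).card ≤ d))
    (hνc : ∀ k, ((Finset.univ.filter fun j => ν j k ≠ 0).card ≤ d)) :
    ∑ jk : Fin n × Fin n,
      (if coeffM τ ν γ jk.1 jk.2 ≠ 0 then ((commOp γ jk.1 jk.2 X).map (indB r)).sum else 0)
      ≤ d * (if r' = r then 1 else 0) + (if coeffM τ ν γ r' r ≠ 0 then 1 else 0) := by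
  have hboth := sum_ind_both (n := n) (coeffM τ ν γ) r' r
  have hboth' := sum_ind_both' (n := n) (coeffM τ ν γ) r' r
  have hcol' : ∀ a : Fin n, ∑ jk : Fin n × Fin n,
      (if coeffM τ ν γ jk.1 jk.2 ≠ 0 then (if jk.2 = a then (1:ℝ) else 0) else 0) ≤ d :=
    fun a => sum_ind_col d _ (coeff_col τ ν d γ hτc hνc) a
  rcases hX with rfl | rfl <;> cases γ
  · -- γ = false, X = ann r'
    have hg : ∀ jk : Fin n × Fin n,
        ((commOp false jk.1 jk.2 (FOp.ann r')).map (indB r)).sum =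
        (if jk.2 = r' then (1:ℝ) else 0) * (if r' = r then 1 else 0) +
        (if jk.1 = r' then (1:ℝ) else 0) * (if jk.2 = r then 1 else 0) := by
      intro jk
      by_cases h1 : jk.2 = r' <;> by_cases h2 : jk.1 = r' <;>
        simp [commOp, h1, h2, indB, li_ann, li_ann2, li_num2, mul_ite, ite_mul] <;>
        split_ifs <;> norm_num
    have hsplit : ∀ jk : Fin n × Fin n,
        (if coeffM τ ν false jk.1 jk.2 ≠ 0 then
          ((commOp false jk.1 jk.2 (FOp.ann r')).map (indB r)).sum else 0) =
        (if coeffM τ ν false jk.1 jk.2 ≠ 0 then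
          (if jk.2 = r' then (1:ℝ) else 0) * (if r' = r then 1 else 0) else 0) +
        (if coeffM τ ν false jk.1 jk.2 ≠ 0 then
          (if jk.1 = r' then (1:ℝ) else 0) * (if jk.2 = r then 1 else 0) else 0) := by
      intro jk
      by_cases hc : coeffM τ ν false jk.1 jk.2 ≠ 0 <;> simp [hc, hg jk]
    have hS1 : ∑ jk : Fin n × Fin n,
        (if coeffM τ ν false jk.1 jk.2 ≠ 0 then
          (if jk.2 = r' then (1:ℝ) else 0) * (if r' = r then 1 else 0) else 0) ≤
        (d : ℝ) * (if r' = r then 1 else 0) := by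
      by_cases h3 : r' = r
      · have := hcol' r
        simp only [h3]
        simpa using this
      · simp [h3]
    rw [Finset.sum_congr rfl fun jk _ => hsplit jk, Finset.sum_add_distrib, hboth]
    linarith [hS1]
  · -- γ = true, X = ann r'
    have hg : ∀ jk : Fin n × Fin n,
        ((commOp true jk.1 jk.2 (FOp.ann r')).map (indB r)).sum =
        (if r' = jk.1 then (1:ℝ) else 0) * (if jk.2 = r then 1 else 0) := by
      intro jk
      by_cases h1 : r' = jk.1 <;>
        simp [commOp, h1, indB, li_ann, mul_ite, ite_mul] <;>
        split_ifs <;> norm_num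
    have hsplit : ∀ jk : Fin n × Fin n,
        (if coeffM τ ν true jk.1 jk.2 ≠ 0 then
          ((commOp true jk.1 jk.2 (FOp.ann r')).map (indB r)).sum else 0) =
        (if coeffM τ ν true jk.1 jk.2 ≠ 0 then
          (if r' = jk.1 then (1:ℝ) else 0) * (if jk.2 = r then 1 else 0) else 0) := by
      intro jk
      by_cases hc : coeffM τ ν true jk.1 jk.2 ≠ 0 <;> simp [hc, hg jk]
    rw [Finset.sum_congr rfl fun jk _ => hsplit jk, hboth']
    have : (0:ℝ) ≤ d * (if r' = r then 1 else 0) := by positivity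
    linarith
  · -- γ = false, X = num r'
    have hg : ∀ jk : Fin n × Fin n,
        (if coeffM τ ν false jk.1 jk.2 ≠ 0 then
          ((commOp false jk.1 jk.2 (FOp.num r')).map (indB r)).sum else 0) = 0 := by
      intro jk
      by_cases hc : coeffM τ ν false jk.1 jk.2 ≠ 0 <;> simp [hc, commOp]
    rw [Finset.sum_congr rfl fun jk _ => hg jk]
    have h1 : (0:ℝ) ≤ d * (if r' = r then 1 else 0) := by positivity
    have h2 : (0:ℝ) ≤ (if coeffM τ ν false r' r ≠ 0 then (1:ℝ) else 0) := by positivity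
    simp only [Finset.sum_const_zero]
    linarith
  · -- γ = true, X = num r'
    have hg : ∀ jk : Fin n × Fin n,
        ((commOp true jk.1 jk.2 (FOp.num r')).map (indB r)).sum ≤
        (if jk.2 = r then (1:ℝ) else 0) * (if r' = r then 1 else 0) +
        (if jk.1 = r' then (1:ℝ) else 0) * (if jk.2 = r then 1 else 0) := by
      intro jk
      by_cases h1 : jk.2 = r' <;> by_cases h2 : jk.1 = r' <;>
        simp [commOp, h1, h2, indB, li_ann2, mul_ite, ite_mul] <;>
        split_ifs <;> norm_num
    have hsplit : ∀ jk : Fin n × Fin n,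
        (if coeffM τ ν true jk.1 jk.2 ≠ 0 then
          ((commOp true jk.1 jk.2 (FOp.num r')).map (indB r)).sum else 0) ≤
        (if coeffM τ ν true jk.1 jk.2 ≠ 0 then
          (if jk.2 = r then (1:ℝ) else 0) * (if r' = r then 1 else 0) else 0) +
        (if coeffM τ ν true jk.1 jk.2 ≠ 0 then
          (if jk.1 = r' then (1:ℝ) else 0) * (if jk.2 = r then 1 else 0) else 0) := by
      intro jk
      by_cases hc : coeffM τ ν true jk.1 jk.2 ≠ 0
      · rw [if_pos hc, if_pos hc, if_pos hc]; exact hg jk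
      · rw [if_neg hc, if_neg hc, if_neg hc]; norm_num
    have hS1 : ∑ jk : Fin n × Fin n,
        (if coeffM τ ν true jk.1 jk.2 ≠ 0 then
          (if jk.2 = r then (1:ℝ) else 0) * (if r' = r then 1 else 0) else 0) ≤
        (d : ℝ) * (if r' = r then 1 else 0) := by
      by_cases h3 : r' = r
      · have := hcol' r
        simp only [h3]
        simpa using this
      · simp [h3]
    refine le_trans (Finset.sum_le_sum fun jk _ => hsplit jk) ?_
    rw [Finset.sum_add_distrib, hboth]
    linarith [hS1]

end Count2

section Count3

variable {n : ℕ} (τ ν : Matrix (Fin n) (Fin n) ℂ) (d : ℕ)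

lemma commList_sum_le (γ : Bool)
    (hτr : ∀ j, ((Finset.univ.filter fun k => τ j k ≠ 0).card ≤ d))
    (hτc : ∀ k, ((Finset.univ.filter fun j => τ j k ≠ 0).card ≤ d))
    (hνr : ∀ j, ((Finset.univ.filter fun k => ν j k ≠ 0).card ≤ d))
    (hνc : ∀ k, ((Finset.univ.filter fun j => ν j k ≠ 0).card ≤ d)) :
    ∀ (M : List (FOp n)) (r r' : Fin n), lastIdx M = some r' →
    ∑ jk : Fin n × Fin n, (if coeffM τ ν γ jk.1 jk.2 ≠ 0 then
        ((commList γ jk.1 jk.2 M).map (indB r)).sum else 0)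
    ≤ 2*(d:ℝ)*(M.length : ℝ)*(if r' = r then 1 else 0) +
      (if coeffM τ ν γ r' r ≠ 0 then 1 else 0) := by
  intro M
  induction M with
  | nil => intro r r' h; rw [lastIdx] at h; simp at h
  | cons X rest ih =>
    intro r r' hlast
    have he : (0:ℝ) ≤ (if r' = r then (1:ℝ) else 0) := by positivity
    have hd0 : (0:ℝ) ≤ (d : ℝ) := Nat.cast_nonneg d
    by_cases hrest : rest = []
    · subst hrest
      have hX : X = FOp.ann r' ∨ X = FOp.num r' := by
        cases X <;> rw [lastIdx] at hlast <;> simp_all [List.getLast?]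
      have heq : ∀ jk : Fin n × Fin n, ((commList γ jk.1 jk.2 [X]).map (indB r)).sum =
          ((commOp γ jk.1 jk.2 X).map (indB r)).sum := by
        intro jk
        simp only [commList, List.map_nil, List.append_nil, List.map_map]
        refine congrArg List.sum (List.map_congr_left fun p _ => ?_)
        simp [indB, Function.comp]
      have heq2 : ∀ jk : Fin n × Fin n,
          (if coeffM τ ν γ jk.1 jk.2 ≠ 0 then
            ((commList γ jk.1 jk.2 [X]).map (indB r)).sum else 0) =
          (if coeffM τ ν γ jk.1 jk.2 ≠ 0 then
            ((commOp γ jk.1 jk.2 X).map (indB r)).sum else 0) := by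
        intro jk
        by_cases hc : coeffM τ ν γ jk.1 jk.2 ≠ 0 <;> simp [hc, heq jk]
      rw [Finset.sum_congr rfl fun jk _ => heq2 jk]
      refine le_trans (commOp_final_sum τ ν d γ r r' X hX hτc hνc) ?_
      have hdd : (d:ℝ) * (if r' = r then 1 else 0) ≤
          2*(d:ℝ)*((List.length [X] : ℕ) : ℝ)*(if r' = r then 1 else 0) := by
        simp only [List.length_singleton]
        push_cast
        nlinarith [mul_nonneg hd0 he]
      linarith
    · have hlast' : lastIdx rest = some r' := by rwa [lastIdx_cons X hrest] at hlast
      have hsplit : ∀ jk : Fin n × Fin n,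
          ((commList γ jk.1 jk.2 (X :: rest)).map (indB r)).sum =
          ((commOp γ jk.1 jk.2 X).length : ℝ) * (if r' = r then 1 else 0) +
          ((commList γ jk.1 jk.2 rest).map (indB r)).sum := by
        intro jk
        rw [commList, List.map_append, List.sum_append, List.map_map, List.map_map]
        congr 1
        · have hconst : (indB r ∘ fun p : Bool × List (FOp n) => (p.1, p.2 ++ rest)) =
              fun _ : Bool × List (FOp n) => (if r' = r then (1:ℝ) else 0) := by
            funext p
            simp only [Function.comp, indB]
            rw [lastIdx_append _ hrest, hlast']
            simp
          rw [hconst, List.map_const', List.sum_replicate, nsmul_eq_mul]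
        · refine congrArg List.sum (List.map_congr_left fun p hp => ?_)
          have hp2 : p.2 ≠ [] := by
            obtain ⟨-, r1, hr1⟩ := mem_commList_shape hp ⟨r', hlast'⟩
            exact lastIdx_ne_nil hr1
          simp only [Function.comp, indB]
          rw [lastIdx_cons X hp2]
      have hsplit2 : ∀ jk : Fin n × Fin n,
          (if coeffM τ ν γ jk.1 jk.2 ≠ 0 then
            ((commList γ jk.1 jk.2 (X :: rest)).map (indB r)).sum else 0) =
          (if coeffM τ ν γ jk.1 jk.2 ≠ 0 then
            ((commOp γ jk.1 jk.2 X).length : ℝ) else 0) * (if r' = r then 1 else 0) +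
          (if coeffM τ ν γ jk.1 jk.2 ≠ 0 then
            ((commList γ jk.1 jk.2 rest).map (indB r)).sum else 0) := by
        intro jk
        by_cases hc : coeffM τ ν γ jk.1 jk.2 ≠ 0
        · rw [if_pos hc, if_pos hc, if_pos hc, hsplit jk]
        · rw [if_neg hc, if_neg hc, if_neg hc]; ring
      rw [Finset.sum_congr rfl fun jk _ => hsplit2 jk, Finset.sum_add_distrib,
        ← Finset.sum_mul]
      have h1 : (∑ jk : Fin n × Fin n, if coeffM τ ν γ jk.1 jk.2 ≠ 0 then
            ((commOp γ jk.1 jk.2 X).length : ℝ) else 0) * (if r' = r then 1 else 0) ≤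
          2*(d:ℝ) * (if r' = r then 1 else 0) :=
        mul_le_mul_of_nonneg_right (commOp_len_sum τ ν d γ X hτr hτc hνr hνc) he
      have h2 := ih r r' hlast'
      have hlen : ((X :: rest).length : ℝ) = (rest.length : ℝ) + 1 := by
        simp only [List.length_cons]; push_cast; ring
      rw [hlen]
      nlinarith [mul_nonneg (mul_nonneg (mul_nonneg (by norm_num : (0:ℝ) ≤ 2) hd0)
        (Nat.cast_nonneg rest.length : (0:ℝ) ≤ (rest.length:ℝ))) he]

/-- indicator for paths -/
def indP {n : ℕ} (r : Fin n) (P : FPath n) : ℝ := if lastIdx P.2 = some r then 1 else 0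

lemma commPath_map_ind {n : ℕ} (γ : Bool) (j k : Fin n) (P : FPath n) (r : Fin n) :
    ((commPath γ j k P).map (indP r)).sum = ((commList γ j k P.2).map (indB r)).sum := by
  rw [commPath, List.map_map]
  rfl

lemma T_ind_bound
    (hτr : ∀ j, ((Finset.univ.filter fun k => τ j k ≠ 0).card ≤ d))
    (hτc : ∀ k, ((Finset.univ.filter fun j => τ j k ≠ 0).card ≤ d))
    (hνr : ∀ j, ((Finset.univ.filter fun k => ν j k ≠ 0).card ≤ d))
    (hνc : ∀ k, ((Finset.univ.filter fun j => ν j k ≠ 0).card ≤ d)) :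
    ∀ (l : List Bool), l ≠ [] → ∀ r : Fin n,
      T τ ν l (indP r) ≤ (d : ℝ) * (2*(d:ℝ)*((l.length : ℝ)+2))^(l.length - 1) := by
  intro l
  induction l with
  | nil => intro h; exact absurd rfl h
  | cons γ l ih =>
    intro _ r
    have hd0 : (0:ℝ) ≤ (d : ℝ) := Nat.cast_nonneg d
    cases l with
    | nil =>
      rw [T]
      unfold pairsSum
      have h2 : ∀ jk : Fin n × Fin n,
          (if coeffM τ ν γ jk.1 jk.2 ≠ 0 then indP r (basePath γ jk.1 jk.2) else 0) =
          (if coeffM τ ν γ jk.1 jk.2 ≠ 0 then (if jk.2 = r then (1:ℝ) else 0) else 0) := by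
        intro jk
        by_cases hc : coeffM τ ν γ jk.1 jk.2 ≠ 0
        · rw [if_pos hc, if_pos hc, indP, basePath_lastIdx]; simp
        · rw [if_neg hc, if_neg hc]
      rw [Finset.sum_congr rfl fun jk _ => h2 jk]
      refine le_trans (sum_ind_col d _ (coeff_col τ ν d γ hτc hνc) r) ?_
      simp
    | cons a l' =>
      have hne : (a :: l') ≠ [] := by simp
      set m : ℕ := l'.length with hm
      have hL : (a :: l').length = m + 1 := by simp [hm]
      rw [T_cons τ ν γ hne]
      -- step 1: swap sums
      have step1 : (pairsSum τ ν γ fun jk => T τ ν (a :: l')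
            fun P => ((commPath γ jk.1 jk.2 P).map (indP r)).sum) =
          T τ ν (a :: l') (fun P => ∑ jk : Fin n × Fin n,
            if coeffM τ ν γ jk.1 jk.2 ≠ 0 then
              ((commList γ jk.1 jk.2 P.2).map (indB r)).sum else 0) := by
        unfold pairsSum
        have h1 : ∀ jk : Fin n × Fin n,
            (if coeffM τ ν γ jk.1 jk.2 ≠ 0 then
              T τ ν (a :: l') (fun P => ((commPath γ jk.1 jk.2 P).map (indP r)).sum) else 0) =
            T τ ν (a :: l') (fun P => if coeffM τ ν γ jk.1 jk.2 ≠ 0 then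
              ((commList γ jk.1 jk.2 P.2).map (indB r)).sum else 0) := by
          intro jk
          by_cases hc : coeffM τ ν γ jk.1 jk.2 ≠ 0
          · rw [if_pos hc]
            exact T_congr τ ν _ _ _ fun P => by rw [if_pos hc, commPath_map_ind]
          · rw [if_neg hc,
              T_congr τ ν (a :: l')
                (fun P => if coeffM τ ν γ jk.1 jk.2 ≠ 0 then
                  ((commList γ jk.1 jk.2 P.2).map (indB r)).sum else 0)
                (fun _ => (0:ℝ)) (fun P => by simp [hc]), T_zero]
        rw [Finset.sum_congr rfl fun jk _ => h1 jk, ← T_finsetSum]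
      rw [step1]
      -- step 2: pointwise bound via T_mono
      have step2 : T τ ν (a :: l') (fun P => ∑ jk : Fin n × Fin n,
            if coeffM τ ν γ jk.1 jk.2 ≠ 0 then
              ((commList γ jk.1 jk.2 P.2).map (indB r)).sum else 0) ≤
          T τ ν (a :: l') (fun P =>
            2*(d:ℝ)*(((m:ℝ)+1)+2) * indP r P +
            ∑ r'' : Fin n, (if coeffM τ ν γ r'' r ≠ 0 then indP r'' P else 0)) := by
        refine T_mono τ ν (a :: l') hne _ _ fun P hP => ?_
        obtain ⟨hlen, r₀, hr₀⟩ := hP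
        refine le_trans (commList_sum_le τ ν d γ hτr hτc hνr hνc P.2 r r₀ hr₀) ?_
        have e1 : indP r P = (if r₀ = r then (1:ℝ) else 0) := by
          rw [indP, hr₀]; simp
        have e2 : ∑ r'' : Fin n, (if coeffM τ ν γ r'' r ≠ 0 then indP r'' P else 0) =
            (if coeffM τ ν γ r₀ r ≠ 0 then (1:ℝ) else 0) := by
          rw [Fintype.sum_eq_single r₀]
          · rw [indP, hr₀]; simp
          · intro r'' hne'
            have hz : indP r'' P = 0 := by
              rw [indP, hr₀]
              simp [Ne.symm hne']
            simp [hz]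
        rw [e1, e2]
        have hlen' : (P.2.length : ℝ) ≤ (m:ℝ) + 2 := by
          rw [hL] at hlen
          exact_mod_cast le_trans hlen (by omega)
        have hkey : 2*(d:ℝ)*(P.2.length:ℝ)*(if r₀ = r then (1:ℝ) else 0) ≤
            2*(d:ℝ)*(((m:ℝ)+1)+2)*(if r₀ = r then (1:ℝ) else 0) := by
          by_cases hrr : r₀ = r
          · simp only [hrr, eq_self_iff_true, if_true, mul_one]
            have := mul_le_mul_of_nonneg_left hlen' (by positivity : (0:ℝ) ≤ 2*(d:ℝ))
            nlinarith
          · simp [hrr]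
        linarith
      refine le_trans step2 ?_
      -- step 3: linearity
      have step3 : T τ ν (a :: l') (fun P =>
            2*(d:ℝ)*(((m:ℝ)+1)+2) * indP r P +
            ∑ r'' : Fin n, (if coeffM τ ν γ r'' r ≠ 0 then indP r'' P else 0)) =
          2*(d:ℝ)*(((m:ℝ)+1)+2) * T τ ν (a :: l') (indP r) +
          ∑ r'' : Fin n, (if coeffM τ ν γ r'' r ≠ 0 then T τ ν (a :: l') (indP r'') else 0) := by
        rw [T_add]
        congr 1
        · exact T_smul τ ν (a :: l') _ _
        · rw [T_finsetSum]
          refine Finset.sum_congr rfl fun r'' _ => ?_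
          by_cases hc : coeffM τ ν γ r'' r ≠ 0
          · rw [if_pos hc]
            refine T_congr τ ν _ _ _ fun P => ?_
            rw [if_pos hc]
          · rw [if_neg hc,
              T_congr τ ν (a :: l')
                (fun P => if coeffM τ ν γ r'' r ≠ 0 then indP r'' P else 0)
                (fun _ => (0:ℝ)) (fun P => by simp [hc]), T_zero]
      rw [step3]
      -- step 4: numeric bounds
      set B : ℝ := (d:ℝ) * (2*(d:ℝ)*(((a :: l').length : ℝ)+2))^((a :: l').length - 1)
        with hBdef
      have hBnn : 0 ≤ B := by positivity
      have hB : T τ ν (a :: l') (indP r) ≤ B := ih hne r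
      have hsum4 : ∑ r'' : Fin n,
          (if coeffM τ ν γ r'' r ≠ 0 then T τ ν (a :: l') (indP r'') else 0) ≤ (d:ℝ) * B := by
        have hpt : ∀ r'' : Fin n,
            (if coeffM τ ν γ r'' r ≠ 0 then T τ ν (a :: l') (indP r'') else 0) ≤
            (if coeffM τ ν γ r'' r ≠ 0 then B else 0) := by
          intro r''
          by_cases hc : coeffM τ ν γ r'' r ≠ 0
          · rw [if_pos hc, if_pos hc]; exact ih hne r''
          · rw [if_neg hc, if_neg hc]
        refine le_trans (Finset.sum_le_sum fun r'' _ => hpt r'') ?_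
        rw [Finset.sum_ite, Finset.sum_const, Finset.sum_const_zero, add_zero, nsmul_eq_mul]
        have hcard : (((Finset.univ.filter fun r'' => coeffM τ ν γ r'' r ≠ 0).card : ℕ) : ℝ)
            ≤ (d:ℝ) := by exact_mod_cast coeff_col τ ν d γ hτc hνc r
        exact mul_le_mul_of_nonneg_right hcard hBnn
      -- final arithmetic
      have hBval : B = (d:ℝ) * (2*(d:ℝ)*(((m:ℝ)+1)+2))^m := by
        rw [hBdef, hL]
        norm_num
      have hpow : (2*(d:ℝ)*(((m:ℝ)+1)+2))^m ≤ (2*(d:ℝ)*(((m:ℝ)+2)+2))^m := by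
        refine pow_le_pow_left₀ (by positivity) (by nlinarith) m
      have hgoal : 2*(d:ℝ)*(((m:ℝ)+1)+2) * T τ ν (a :: l') (indP r) +
          ∑ r'' : Fin n, (if coeffM τ ν γ r'' r ≠ 0 then T τ ν (a :: l') (indP r'') else 0) ≤
          (d:ℝ) * (2*(d:ℝ)*(((m:ℝ)+2)+2))^(m+1) := by
        have ht1 : 2*(d:ℝ)*(((m:ℝ)+1)+2) * T τ ν (a :: l') (indP r) ≤
            2*(d:ℝ)*(((m:ℝ)+1)+2) * B :=
          mul_le_mul_of_nonneg_left hB (by positivity)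
        have hstep : 2*(d:ℝ)*(((m:ℝ)+1)+2) * B + (d:ℝ) * B ≤
            (2*(d:ℝ)*(((m:ℝ)+2)+2)) * B := by
          nlinarith [mul_nonneg hd0 hBnn]
        have hfin : (2*(d:ℝ)*(((m:ℝ)+2)+2)) * B ≤ (d:ℝ) * (2*(d:ℝ)*(((m:ℝ)+2)+2))^(m+1) := by
          rw [hBval]
          calc (2*(d:ℝ)*(((m:ℝ)+2)+2)) * ((d:ℝ) * (2*(d:ℝ)*(((m:ℝ)+1)+2))^m)
              ≤ (2*(d:ℝ)*(((m:ℝ)+2)+2)) * ((d:ℝ) * (2*(d:ℝ)*(((m:ℝ)+2)+2))^m) := by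
                refine mul_le_mul_of_nonneg_left ?_ (by positivity)
                exact mul_le_mul_of_nonneg_left hpow hd0
            _ = (d:ℝ) * (2*(d:ℝ)*(((m:ℝ)+2)+2))^(m+1) := by
                rw [pow_succ]; ring
        linarith
      refine le_trans hgoal (le_of_eq ?_)
      have hlen2 : ((γ :: a :: l').length : ℝ) = (m:ℝ) + 2 := by
        simp only [List.length_cons]; push_cast [hm]; ring
      have hlen3 : (γ :: a :: l').length - 1 = m + 1 := by simp [hm]
      rw [hlen2, hlen3]

end Count3

lemma expandNested_cons {n : ℕ} (γ : Bool) (j k : Fin n)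
    {rest : List (Bool × Fin n × Fin n)} (h : rest ≠ []) :
    expandNested ((γ, j, k) :: rest) = (expandNested rest).flatMap (commPath γ j k) := by
  cases rest with
  | nil => exact absurd rfl h
  | cons a l => rfl

lemma map_sum_flatMap {α β : Type*} (φ : β → ℝ) (g : α → List β) (l : List α) :
    ((l.flatMap g).map φ).sum = (l.map fun x => ((g x).map φ).sum).sum := by
  induction l with
  | nil => simp
  | cons a l ih => simp [List.flatMap_cons, ih]

lemma bridge {n : ℕ} (τ ν : Matrix (Fin n) (Fin n) ℂ) :
    ∀ (m : ℕ) (γ : Fin (m + 1) → Bool) (φ : FPath n → ℝ),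
    (∑ idx : Fin (m + 1) → Fin n × Fin n,
      if ∀ q, coeffM τ ν (γ q) (idx q).1 (idx q).2 ≠ 0 then
        ((expandNested ((List.ofFn fun q => (γ q, idx q)).reverse)).map φ).sum else 0)
    = T τ ν ((List.ofFn γ).reverse) φ := by
  intro m
  induction m with
  | zero =>
    intro γ φ
    rw [← Equiv.sum_comp (Equiv.funUnique (Fin 1) (Fin n × Fin n)).symm]
    have hofn : (List.ofFn γ).reverse = [γ 0] := by simp [List.ofFn_succ]
    rw [hofn, T]
    unfold pairsSum
    refine Finset.sum_congr rfl fun jk _ => ?_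
    obtain ⟨j, k⟩ := jk
    have h1 : (∀ q : Fin 1, coeffM τ ν (γ q)
        (((Equiv.funUnique (Fin 1) (Fin n × Fin n)).symm (j, k)) q).1
        (((Equiv.funUnique (Fin 1) (Fin n × Fin n)).symm (j, k)) q).2 ≠ 0) ↔
        coeffM τ ν (γ 0) j k ≠ 0 := by
      constructor
      · intro h; exact h 0
      · intro h q
        rw [show q = 0 from Subsingleton.elim q 0]
        exact h
    rw [if_congr h1 rfl rfl]
    by_cases hc : coeffM τ ν (γ 0) j k ≠ 0
    · rw [if_pos hc, if_pos hc]
      have h2 : (List.ofFn fun q : Fin 1 =>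
          (γ q, ((Equiv.funUnique (Fin 1) (Fin n × Fin n)).symm (j, k)) q)).reverse =
          [(γ 0, j, k)] := by simp [List.ofFn_succ]
      rw [h2]
      show φ (basePath (γ 0) j k) + 0 = φ (basePath (γ 0) j k)
      ring
    · rw [if_neg hc, if_neg hc]
  | succ m IH =>
    intro γ φ
    rw [← Equiv.sum_comp (Fin.snocEquiv (fun _ => Fin n × Fin n)), Fintype.sum_prod_type]
    have hofn : (List.ofFn γ).reverse =
        γ (Fin.last (m + 1)) :: (List.ofFn fun q : Fin (m + 1) => γ q.castSucc).reverse := by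
      rw [List.ofFn_succ' γ, List.concat_eq_append, List.reverse_concat']
    have hrev_ne : (List.ofFn fun q : Fin (m + 1) => (γ q.castSucc : Bool)).reverse ≠ [] := by
      simp
    have inner : ∀ x : Fin n × Fin n,
        (∑ f : Fin (m + 1) → Fin n × Fin n,
          if ∀ q, coeffM τ ν (γ q) ((Fin.snocEquiv (fun _ => Fin n × Fin n) (x, f)) q).1
              ((Fin.snocEquiv (fun _ => Fin n × Fin n) (x, f)) q).2 ≠ 0 then
            ((expandNested ((List.ofFn fun q =>
              (γ q, (Fin.snocEquiv (fun _ => Fin n × Fin n) (x, f)) q)).reverse)).map φ).sum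
          else 0) =
        (if coeffM τ ν (γ (Fin.last (m + 1))) x.1 x.2 ≠ 0 then
          T τ ν ((List.ofFn fun q : Fin (m + 1) => γ q.castSucc).reverse)
            (fun P => ((commPath (γ (Fin.last (m + 1))) x.1 x.2 P).map φ).sum)
        else 0) := by
      intro x
      by_cases hx : coeffM τ ν (γ (Fin.last (m + 1))) x.1 x.2 ≠ 0
      · rw [if_pos hx, ← IH (fun q => γ q.castSucc)
          (fun P => ((commPath (γ (Fin.last (m + 1))) x.1 x.2 P).map φ).sum)]
        refine Finset.sum_congr rfl fun f _ => ?_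
        have hsnoc : ∀ q : Fin (m + 1),
            (Fin.snocEquiv (fun _ => Fin n × Fin n) (x, f)) q.castSucc = f q := by
          intro q
          simp [Fin.snocEquiv, Fin.snoc_castSucc]
        have hsnocl : (Fin.snocEquiv (fun _ => Fin n × Fin n) (x, f)) (Fin.last (m + 1)) = x := by
          simp [Fin.snocEquiv, Fin.snoc_last]
        have hcond : (∀ q, coeffM τ ν (γ q)
            ((Fin.snocEquiv (fun _ => Fin n × Fin n) (x, f)) q).1
            ((Fin.snocEquiv (fun _ => Fin n × Fin n) (x, f)) q).2 ≠ 0) ↔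
            (∀ q : Fin (m + 1), coeffM τ ν (γ q.castSucc) (f q).1 (f q).2 ≠ 0) := by
          constructor
          · intro h q
            have := h q.castSucc
            rwa [hsnoc q] at this
          · intro h q
            induction q using Fin.lastCases with
            | last => rwa [hsnocl]
            | cast i =>
              rw [hsnoc i]
              exact h i
        rw [if_congr hcond rfl rfl]
        by_cases hf : ∀ q : Fin (m + 1), coeffM τ ν (γ q.castSucc) (f q).1 (f q).2 ≠ 0
        · rw [if_pos hf, if_pos hf]
          have hlist : (List.ofFn fun q =>
              (γ q, (Fin.snocEquiv (fun _ => Fin n × Fin n) (x, f)) q)).reverse =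
              (γ (Fin.last (m + 1)), x) ::
                (List.ofFn fun q : Fin (m + 1) => (γ q.castSucc, f q)).reverse := by
            rw [List.ofFn_succ', List.concat_eq_append, List.reverse_concat', hsnocl]
            congr 2
            exact congrArg List.ofFn (funext fun q => by rw [hsnoc])
          rw [hlist]
          have hne2 : (List.ofFn fun q : Fin (m + 1) => (γ q.castSucc, f q)).reverse ≠ [] := by
            simp
          obtain ⟨j, k⟩ := x
          rw [expandNested_cons _ _ _ hne2, map_sum_flatMap]
        · rw [if_neg hf, if_neg hf]
      · rw [if_neg hx]
        refine Finset.sum_eq_zero fun f _ => ?_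
        rw [if_neg]
        intro hall
        have := hall (Fin.last (m + 1))
        refine hx ?_
        simpa [Fin.snocEquiv, Fin.snoc_last] using this
    rw [Finset.sum_congr rfl fun x _ => inner x, hofn,
      T_cons τ ν (γ (Fin.last (m + 1))) hrev_ne φ]
    rfl

theorem sparse_path_counting_bound' (p : ℕ) :
    ∃ K : ℝ, ∀ (n d : ℕ) (γ : Fin (p + 1) → Bool)
      (τ ν : Matrix (Fin n) (Fin n) ℂ),
      (∀ j : Fin n, (Finset.univ.filter fun k => τ j k ≠ 0).card ≤ d) →
      (∀ k : Fin n, (Finset.univ.filter fun j => τ j k ≠ 0).card ≤ d) →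
      (∀ j : Fin n, (Finset.univ.filter fun k => ν j k ≠ 0).card ≤ d) →
      (∀ k : Fin n, (Finset.univ.filter fun j => ν j k ≠ 0).card ≤ d) →
      ∀ (η : ℕ) (c : Config n), wt c = η →
        ∑ idx : Fin (p + 1) → Fin n × Fin n,
          (if ∀ q, (if γ q then τ else ν) (idx q).1 (idx q).2 ≠ 0 then
            (((expandNested ((List.ofFn fun q => (γ q, idx q)).reverse)).map
                fun P => ‖appM (FPath.toM P) (EuclideanSpace.single c 1)‖).sum)
          else 0) ≤ K * (η : ℝ) * (d : ℝ) ^ (p + 1) := by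
  refine ⟨(2*((p:ℝ)+3))^p, ?_⟩
  intro n d γ τ ν hτr hτc hνr hνc η c hwt
  set φn : FPath n → ℝ := fun P => ‖appM (FPath.toM P) (EuclideanSpace.single c 1)‖ with hφn
  set L : List Bool := (List.ofFn γ).reverse with hLdef
  have hLlen : L.length = p + 1 := by simp [hLdef]
  have hLne : L ≠ [] := by
    rw [hLdef]
    simp
  have hb := bridge τ ν p γ φn
  simp only [coeffM] at hb
  refine le_trans (le_of_eq hb) ?_
  -- occupied set
  set occ : Finset (Fin n) := Finset.univ.filter fun r => c r = true with hocc
  have hoccard : occ.card = η := by rw [hocc, ← hwt, wt]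
  -- pointwise bound
  have hmono : T τ ν L φn ≤ T τ ν L (fun P => ∑ r ∈ occ, indP r P) := by
    refine T_mono τ ν L hLne _ _ fun P hP => ?_
    obtain ⟨-, r₀, hr₀⟩ := hP
    have hnn : ∀ r ∈ occ, 0 ≤ indP r P := by
      intro r _
      rw [indP]
      positivity
    by_cases hc : c r₀ = true
    · have h1 : φn P ≤ 1 := by
        rw [hφn]
        simp only
        rw [show EuclideanSpace.single c (1:ℂ) = eV c from rfl]
        exact path_norm_le P c
      have hmem : r₀ ∈ occ := by rw [hocc]; simp [hc]
      have h2 : indP r₀ P = 1 := by rw [indP, hr₀]; simp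
      have h3 := Finset.single_le_sum hnn hmem
      rw [h2] at h3
      linarith
    · have h0 : φn P = 0 := by
        rw [hφn]
        simp only
        rw [show EuclideanSpace.single c (1:ℂ) = eV c from rfl,
          path_norm_zero P c r₀ hr₀ (by simpa using hc)]
        simp
      rw [h0]
      exact Finset.sum_nonneg hnn
  refine le_trans hmono ?_
  rw [T_finsetSum]
  -- each term bounded
  have hB := T_ind_bound τ ν d hτr hτc hνr hνc L hLne
  set B : ℝ := (d:ℝ) * (2*(d:ℝ)*((L.length : ℝ)+2))^(L.length - 1) with hBdef
  have hBnn : 0 ≤ B := by positivity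
  have hsum : ∑ r ∈ occ, T τ ν L (indP r) ≤ (η : ℝ) * B := by
    refine le_trans (Finset.sum_le_sum fun r _ => hB r) ?_
    rw [Finset.sum_const, nsmul_eq_mul, hoccard]
  refine le_trans hsum (le_of_eq ?_)
  rw [hBdef, hLlen]
  have hexp : p + 1 - 1 = p := by omega
  rw [hexp]
  have hcast : ((p + 1 : ℕ) : ℝ) + 2 = (p:ℝ) + 3 := by push_cast; ring
  rw [hcast]
  have hpow : (2*(d:ℝ)*((p:ℝ)+3))^p = (2*((p:ℝ)+3))^p * (d:ℝ)^p := by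
    rw [← mul_pow]
    congr 1
    ring
  rw [hpow, pow_succ]
  ring

/-- **Sparse path-counting bound.** If every row and column of `τ` and `ν` has
at most `d` nonzero entries, then for any `γ ∈ {0,1}^{p+1}` and any
configuration `c` with `η` electrons, the total weight
`∑_{index tuples} ∑_{paths P} ‖P|c⟩‖` of the expansion of the nested commutator
is at most `K·η·d^{p+1}`, with `K` depending only on `p`. -/
theorem sparse_path_counting_bound (p : ℕ) :
    ∃ K : ℝ, ∀ (n d : ℕ) (γ : Fin (p + 1) → Bool)
      (τ ν : Matrix (Fin n) (Fin n) ℂ),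
      (∀ j : Fin n, (Finset.univ.filter fun k => τ j k ≠ 0).card ≤ d) →
      (∀ k : Fin n, (Finset.univ.filter fun j => τ j k ≠ 0).card ≤ d) →
      (∀ j : Fin n, (Finset.univ.filter fun k => ν j k ≠ 0).card ≤ d) →
      (∀ k : Fin n, (Finset.univ.filter fun j => ν j k ≠ 0).card ≤ d) →
      ∀ (η : ℕ) (c : Config n), wt c = η →
        ∑ idx : Fin (p + 1) → Fin n × Fin n,
          (if ∀ q, (if γ q then τ else ν) (idx q).1 (idx q).2 ≠ 0 then
            (((expandNested ((List.ofFn fun q => (γ q, idx q)).reverse)).map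
                fun P => ‖appM (FPath.toM P) (EuclideanSpace.single c 1)‖).sum)
          else 0) ≤ K * (η : ℝ) * (d : ℝ) ^ (p + 1) := by
  exact sparse_path_counting_bound' p
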